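/- Let X, U ∈ ℝ^{n×k} and Y, V ∈ ℝ^{m×k} be matrices of full column rank (rank k). Then there exists an invertible matrix M ∈ ℝ^{k×k} such that ‖(U + XM)(V − Y(M⁻¹)^⊤)^⊤‖_F² + ‖(U − XM)(V + Y(M⁻¹)^⊤)^⊤‖_F² ≤ 4 · ‖UV^⊤ − XY^⊤‖_F². -/

import Mathlib

open Matrix

/-- Squared Frobenius norm: `‖M‖_F² = ∑_{i,j} M_{ij}²`. -/
def frobSq {n m : ℕ} (M : Matrix (Fin n) (Fin m) ℝ) : ℝ :=
  ∑ i, ∑ j, (M i j) ^ 2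

section helpers

variable {k : ℕ}

lemma sum_two {i j : Fin k} (hij : i ≠ j) (f : Fin k → ℝ)
    (hf : ∀ r, r ≠ i → r ≠ j → f r = 0) : ∑ r, f r = f i + f j := by
  rw [← Finset.sum_pair hij]
  refine (Finset.sum_subset (Finset.subset_univ _) ?_).symm
  intro r _ hr
  simp only [Finset.mem_insert, Finset.mem_singleton, not_or] at hr
  exact hf r hr.1 hr.2

def givens (i j : Fin k) (a b : ℝ) : Matrix (Fin k) (Fin k) ℝ :=
  fun r p =>
    if r = i ∧ p = i then a else if r = j ∧ p = j then a
    else if r = i ∧ p = j then b else if r = j ∧ p = i then -b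
    else if r = p then 1 else 0

lemma givens_col_i {i j : Fin k} (hij : i ≠ j) (a b : ℝ) (r : Fin k) :
    givens i j a b r i = if r = i then a else if r = j then -b else 0 := by
  simp only [givens]
  split_ifs <;> simp_all

lemma givens_col_j {i j : Fin k} (hij : i ≠ j) (a b : ℝ) (r : Fin k) :
    givens i j a b r j = if r = i then b else if r = j then a else 0 := by
  simp only [givens]
  split_ifs <;> simp_all

lemma givens_col_other {i j p : Fin k} (hpi : p ≠ i) (hpj : p ≠ j) (a b : ℝ) (r : Fin k) :
    givens i j a b r p = if r = p then 1 else 0 := by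
  simp only [givens]
  split_ifs <;> simp_all

lemma givens_orth {i j : Fin k} (hij : i ≠ j) {a b : ℝ} (hab : a^2 + b^2 = 1) :
    (givens i j a b)ᵀ * (givens i j a b) = 1 := by
  ext p q
  rw [mul_apply]
  simp only [transpose_apply]
  obtain hpi | hpi := eq_or_ne p i
  · rw [hpi]
    obtain hqi | hqi := eq_or_ne q i
    · rw [hqi]
      rw [sum_two hij _ (fun r hri hrj => by simp [givens_col_i hij, hri, hrj])]
      simp [givens_col_i hij, hij.symm, one_apply]
      nlinarith
    · obtain hqj | hqj := eq_or_ne q j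
      · rw [hqj]
        rw [sum_two hij _ (fun r hri hrj => by
          simp [givens_col_i hij, givens_col_j hij, hri, hrj])]
        simp [givens_col_i hij, givens_col_j hij, hij, hij.symm, one_apply]
        ring
      · rw [sum_two hij _ (fun r hri hrj => by simp [givens_col_i hij, hri, hrj])]
        rw [givens_col_other hqi hqj, givens_col_other hqi hqj]
        simp [one_apply, hij, hij.symm, hqi, hqj, Ne.symm hqi, Ne.symm hqj]
  · obtain hpj | hpj := eq_or_ne p j
    · rw [hpj]
      obtain hqi | hqi := eq_or_ne q i
      · rw [hqi]
        rw [sum_two hij _ (fun r hri hrj => by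
          simp [givens_col_i hij, givens_col_j hij, hri, hrj])]
        simp [givens_col_i hij, givens_col_j hij, hij, hij.symm, one_apply]
        ring
      · obtain hqj | hqj := eq_or_ne q j
        · rw [hqj]
          rw [sum_two hij _ (fun r hri hrj => by simp [givens_col_j hij, hri, hrj])]
          simp [givens_col_j hij, hij.symm, one_apply]
          nlinarith
        · rw [sum_two hij _ (fun r hri hrj => by simp [givens_col_j hij, hri, hrj])]
          rw [givens_col_other hqi hqj, givens_col_other hqi hqj]
          simp [one_apply, hij, hij.symm, hqi, hqj, Ne.symm hqi, Ne.symm hqj]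
    · rw [Finset.sum_eq_single p (fun r _ hr => by
          rw [givens_col_other hpi hpj, if_neg hr, zero_mul])
        (fun h => absurd (Finset.mem_univ p) h)]
      rw [givens_col_other hpi hpj, if_pos rfl, one_mul]
      obtain hqi | hqi := eq_or_ne q i
      · rw [hqi, givens_col_i hij, if_neg hpi, if_neg hpj, one_apply, if_neg (hqi ▸ hpi)]
      · obtain hqj | hqj := eq_or_ne q j
        · rw [hqj, givens_col_j hij, if_neg hpi, if_neg hpj, one_apply, if_neg (hqj ▸ hpj)]
        · rw [givens_col_other hqi hqj, one_apply]

lemma trace_givensT_mul {i j : Fin k} (hij : i ≠ j) (a b : ℝ)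
    (K : Matrix (Fin k) (Fin k) ℝ) :
    trace ((givens i j a b)ᵀ * K) =
      trace K + ((a - 1) * (K i i + K j j) + b * (K i j - K j i)) := by
  have hdiag : ∀ p, ((givens i j a b)ᵀ * K) p p = ∑ r, givens i j a b r p * K r p := by
    intro p; rw [mul_apply]; simp only [transpose_apply]
  have hi : ((givens i j a b)ᵀ * K) i i = a * K i i + (-b) * K j i := by
    rw [hdiag, sum_two hij _ (fun r hri hrj => by simp [givens_col_i hij, hri, hrj])]
    simp [givens_col_i hij, hij.symm]
  have hj : ((givens i j a b)ᵀ * K) j j = b * K i j + a * K j j := by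
    rw [hdiag, sum_two hij _ (fun r hri hrj => by simp [givens_col_j hij, hri, hrj])]
    simp [givens_col_j hij, hij.symm]
  have ho : ∀ p, p ≠ i → p ≠ j → ((givens i j a b)ᵀ * K) p p = K p p := by
    intro p hpi hpj
    rw [hdiag, Finset.sum_eq_single p (fun r _ hr => by
        rw [givens_col_other hpi hpj, if_neg hr, zero_mul])
      (fun h => absurd (Finset.mem_univ p) h)]
    rw [givens_col_other hpi hpj, if_pos rfl, one_mul]
  have key : ∀ p : Fin k, ((givens i j a b)ᵀ * K) p p = K p p +
      (if p = i then (a-1) * K i i + (-b) * K j i else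
       if p = j then b * K i j + (a-1) * K j j else 0) := by
    intro p
    obtain hpi | hpi := eq_or_ne p i
    · rw [hpi, hi, if_pos rfl]; ring
    · obtain hpj | hpj := eq_or_ne p j
      · rw [hpj, hj, if_neg hij.symm, if_pos rfl]; ring
      · rw [ho p hpi hpj, if_neg hpi, if_neg hpj, add_zero]
  have e1 : trace ((givens i j a b)ᵀ * K) = ∑ p, ((givens i j a b)ᵀ * K) p p := rfl
  have e2 : trace K = ∑ p, K p p := rfl
  rw [e1, Finset.sum_congr rfl (fun p _ => key p), Finset.sum_add_distrib, ← e2,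
    sum_two hij _ (fun r hri hrj => by simp [hri, hrj])]
  simp [hij, hij.symm]
  ring

/-- Every real square matrix `H` admits an orthogonal `O` with `OᵀH` symmetric. -/
lemma exists_orth_symm (H : Matrix (Fin k) (Fin k) ℝ) :
    ∃ O : Matrix (Fin k) (Fin k) ℝ, Oᵀ * O = 1 ∧ (Oᵀ * H)ᵀ = Oᵀ * H := by
  classical
  set S : Set (Matrix (Fin k) (Fin k) ℝ) := {O | Oᵀ * O = 1} with hS
  have hclosed : IsClosed S := by
    have : Continuous fun O : Matrix (Fin k) (Fin k) ℝ => Oᵀ * O :=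
      (continuous_id.matrix_transpose).matrix_mul continuous_id
    exact isClosed_singleton.preimage this
  have hsub : S ⊆ Set.univ.pi fun _ : Fin k => Set.univ.pi fun _ : Fin k =>
      Set.Icc (-1 : ℝ) 1 := by
    intro O hO
    intro r _
    intro c _
    have h1 : ∑ t, O t c * O t c = 1 := by
      have := congrFun (congrFun hO c) c
      simpa [mul_apply] using this
    have h2 : O r c ^ 2 ≤ 1 := by
      rw [← h1]
      have : O r c ^ 2 = O r c * O r c := sq (O r c) ▸ by ring
      rw [this]
      exact Finset.single_le_sum (f := fun t => O t c * O t c)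
        (fun t _ => mul_self_nonneg _) (Finset.mem_univ r)
    constructor
    · nlinarith
    · nlinarith
  have hcompact : IsCompact S := by
    refine IsCompact.of_isClosed_subset ?_ hclosed hsub
    exact isCompact_univ_pi fun _ => isCompact_univ_pi fun _ => isCompact_Icc
  have hne : S.Nonempty := ⟨1, by simp [hS]⟩
  have hcont : ContinuousOn (fun O : Matrix (Fin k) (Fin k) ℝ => trace (Oᵀ * H)) S :=
    ((continuous_id.matrix_transpose.matrix_mul continuous_const).matrix_trace).continuousOn
  obtain ⟨O, hOS, hmax⟩ := hcompact.exists_isMaxOn hne hcont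
  refine ⟨O, hOS, ?_⟩
  set K := Oᵀ * H with hK
  -- show K symmetric entrywise
  ext q p
  simp only [transpose_apply]
  rcases eq_or_ne p q with rfl | hpq
  · rfl
  · -- for all a b with a²+b²=1 : a * c + b * s ≤ c, where c := K p p + K q q, s := K p q - K q p
    have main : ∀ a b : ℝ, a^2 + b^2 = 1 →
        a * (K p p + K q q) + b * (K p q - K q p) ≤ K p p + K q q := by
      intro a b hab
      have hmem : O * givens p q a b ∈ S := by
        simp only [hS, Set.mem_setOf_eq, transpose_mul]
        calc (givens p q a b)ᵀ * Oᵀ * (O * givens p q a b)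
            = (givens p q a b)ᵀ * (Oᵀ * O) * givens p q a b := by
              simp [Matrix.mul_assoc]
          _ = 1 := by rw [hOS]; simp [givens_orth hpq hab]
      have hle : trace ((O * givens p q a b)ᵀ * H) ≤ trace (Oᵀ * H) := hmax hmem
      have heq : trace ((O * givens p q a b)ᵀ * H) =
          trace K + ((a - 1) * (K p p + K q q) + b * (K p q - K q p)) := by
        rw [transpose_mul, Matrix.mul_assoc, ← hK, trace_givensT_mul hpq]
      rw [heq, ← hK] at hle
      nlinarith
    -- derive s = 0
    set c := K p p + K q q with hc
    set s := K p q - K q p with hs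
    have hs0 : s = 0 := by
      by_contra hsne
      have hr : Real.sqrt (c^2 + s^2) > 0 := by
        apply Real.sqrt_pos.2
        have h0 := abs_pos.mpr hsne
        nlinarith [sq_nonneg c, sq_abs s, h0]
      set r := Real.sqrt (c^2 + s^2) with hrdef
      have hr2 : r^2 = c^2 + s^2 := Real.sq_sqrt (by positivity)
      have h1 : (c/r)^2 + (s/r)^2 = 1 := by
        field_simp
        linarith [hr2]
      have h2 := main (c/r) (s/r) h1
      -- c²/r + s²/r ≤ c, so r ≤ c, but r² = c² + s² > c², r > 0 → contradiction
      have h3 : (c^2 + s^2)/r ≤ c := by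
        have : c/r * c + s/r * s = (c^2+s^2)/r := by field_simp
        nlinarith [h2]
      have h4 : r ≤ c := by
        have : r^2 / r = r := by
          rw [sq]
          field_simp
        rw [← hr2, this] at h3
        exact h3
      have h5 : 0 < s^2 := by
        have h0 := abs_pos.mpr hsne
        nlinarith [sq_abs s, h0]
      nlinarith [hr2, h4, h5, hr]
    linarith [hs0]

lemma gram_isUnit {m k : ℕ} (Y : Matrix (Fin m) (Fin k) ℝ) (hY : Y.rank = k) :
    IsUnit (Yᵀ * Y).det := by
  have h1 : (Yᵀ * Y).rank = k := by rw [rank_transpose_mul_self]; exact hY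
  have h2 : Function.Surjective (Yᵀ * Y).mulVec := by
    have : LinearMap.range (Yᵀ * Y).mulVecLin = ⊤ := by
      apply Submodule.eq_top_of_finrank_eq
      rw [Matrix.rank] at h1
      rw [h1]
      simp [Module.finrank_fintype_fun_eq_card]
    intro v
    obtain ⟨w, hw⟩ := LinearMap.range_eq_top.mp this v
    exact ⟨w, hw⟩
  exact (isUnit_iff_isUnit_det _).mp (mulVec_surjective_iff_isUnit.mp h2)


variable {n m k : ℕ}

lemma trace_entrywise (P Q : Matrix (Fin n) (Fin m) ℝ) :
    trace (Pᵀ * Q) = ∑ i, ∑ j, P i j * Q i j := by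
  rw [trace]
  simp only [diag, mul_apply, transpose_apply]
  exact Finset.sum_comm

lemma frobSq_sub (P Q : Matrix (Fin n) (Fin m) ℝ) :
    frobSq (P - Q) = frobSq P + frobSq Q - 2 * trace (Pᵀ * Q) := by
  calc frobSq (P - Q) = ∑ i, ∑ j, (P i j ^ 2 + Q i j ^ 2 - 2 * (P i j * Q i j)) := by
        unfold frobSq
        exact Finset.sum_congr rfl fun i _ => Finset.sum_congr rfl fun j _ => by
          simp only [Matrix.sub_apply]; ring
    _ = frobSq P + frobSq Q - 2 * trace (Pᵀ * Q) := by
        rw [trace_entrywise]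
        unfold frobSq
        simp only [Finset.sum_add_distrib, Finset.sum_sub_distrib, Finset.mul_sum]

lemma frobSq_parallelogram (P Q : Matrix (Fin n) (Fin m) ℝ) :
    frobSq (P + Q) + frobSq (P - Q) = 2 * frobSq P + 2 * frobSq Q := by
  calc frobSq (P + Q) + frobSq (P - Q)
      = ∑ i, ∑ j, ((P i j + Q i j) ^ 2 + (P i j - Q i j) ^ 2) := by
        unfold frobSq
        rw [← Finset.sum_add_distrib]
        exact Finset.sum_congr rfl fun i _ => by
          rw [← Finset.sum_add_distrib]
          exact Finset.sum_congr rfl fun j _ => by simp only [Matrix.add_apply, Matrix.sub_apply]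
    _ = ∑ i, ∑ j, (2 * P i j ^ 2 + 2 * Q i j ^ 2) :=
        Finset.sum_congr rfl fun i _ => Finset.sum_congr rfl fun j _ => by ring
    _ = 2 * frobSq P + 2 * frobSq Q := by
        unfold frobSq
        simp only [Finset.sum_add_distrib, Finset.mul_sum]

lemma frobSq_eq_trace (M : Matrix (Fin n) (Fin m) ℝ) : frobSq M = trace (Mᵀ * M) := by
  rw [trace_entrywise]
  simp only [frobSq, sq]

lemma frobSq_factor (E : Matrix (Fin n) (Fin k) ℝ) (F : Matrix (Fin m) (Fin k) ℝ) :
    frobSq (E * Fᵀ) = trace ((Eᵀ * E) * (Fᵀ * F)) := by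
  rw [frobSq_eq_trace, transpose_mul, transpose_transpose]
  simp only [Matrix.mul_assoc]
  rw [Matrix.trace_mul_comm]; simp only [Matrix.mul_assoc]

lemma trace_factor_cross (E G : Matrix (Fin n) (Fin k) ℝ) (F H : Matrix (Fin m) (Fin k) ℝ) :
    trace ((E * Fᵀ)ᵀ * (G * Hᵀ)) = trace ((Eᵀ * G) * (Hᵀ * F)) := by
  rw [transpose_mul, transpose_transpose]
  simp only [Matrix.mul_assoc]
  rw [Matrix.trace_mul_comm]; simp only [Matrix.mul_assoc]

end helpers

open scoped MatrixOrder in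
noncomputable def Matrix.PosSemidef.sqrt {k : ℕ} {A : Matrix (Fin k) (Fin k) ℝ}
    (_ : A.PosSemidef) : Matrix (Fin k) (Fin k) ℝ := CFC.sqrt A

open scoped MatrixOrder in
lemma Matrix.PosSemidef.sqrt_mul_self {k : ℕ} {A : Matrix (Fin k) (Fin k) ℝ}
    (hA : A.PosSemidef) : hA.sqrt * hA.sqrt = A :=
  CFC.sqrt_mul_sqrt_self A (Matrix.nonneg_iff_posSemidef.mpr hA)

open scoped MatrixOrder in
lemma Matrix.PosSemidef.posSemidef_sqrt {k : ℕ} {A : Matrix (Fin k) (Fin k) ℝ}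
    (hA : A.PosSemidef) : hA.sqrt.PosSemidef :=
  Matrix.nonneg_iff_posSemidef.mp (CFC.sqrt_nonneg A)


/-- **Higher rank ℓ₂ LRA identifiability.**  For full column rank `X, U ∈ ℝ^{n×k}` and
`Y, V ∈ ℝ^{m×k}` there is an invertible `M ∈ ℝ^{k×k}` such that
`‖(U + XM)(V − Y(M⁻¹)ᵀ)ᵀ‖_F² + ‖(U − XM)(V + Y(M⁻¹)ᵀ)ᵀ‖_F² ≤ 4‖UVᵀ − XYᵀ‖_F²`. -/
theorem higher_rank_l2_identifiability {n m k : ℕ}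
    (X U : Matrix (Fin n) (Fin k) ℝ) (Y V : Matrix (Fin m) (Fin k) ℝ)
    (hX : X.rank = k) (hU : U.rank = k) (hY : Y.rank = k) (hV : V.rank = k) :
    ∃ M : Matrix (Fin k) (Fin k) ℝ, IsUnit M.det ∧
      frobSq ((U + X * M) * (V - Y * (M⁻¹)ᵀ)ᵀ)
        + frobSq ((U - X * M) * (V + Y * (M⁻¹)ᵀ)ᵀ)
      ≤ 4 * frobSq (U * Vᵀ - X * Yᵀ) := by
  classical
  have hPSDY : (Yᵀ * Y).PosSemidef := by simpa using posSemidef_conjTranspose_mul_self Y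
  have hPSDV : (Vᵀ * V).PosSemidef := by simpa using posSemidef_conjTranspose_mul_self V
  set PY := hPSDY.sqrt with hPYdef
  set PV := hPSDV.sqrt with hPVdef
  have hPY2 : PY * PY = Yᵀ * Y := hPSDY.sqrt_mul_self
  have hPV2 : PV * PV = Vᵀ * V := hPSDV.sqrt_mul_self
  have hPYsym : PYᵀ = PY := hPSDY.posSemidef_sqrt.1
  have hPVsym : PVᵀ = PV := hPSDV.posSemidef_sqrt.1
  have hdY : IsUnit PY.det := by
    have h : PY.det * PY.det = (Yᵀ * Y).det := by rw [← det_mul, hPY2]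
    exact isUnit_of_mul_isUnit_left (h ▸ gram_isUnit Y hY)
  have hdV : IsUnit PV.det := by
    have h : PV.det * PV.det = (Vᵀ * V).det := by rw [← det_mul, hPV2]
    exact isUnit_of_mul_isUnit_left (h ▸ gram_isUnit V hV)
  obtain ⟨O, hO, hsymK⟩ := exists_orth_symm (PY * (Xᵀ * U) * PV)
  set H := PY * (Xᵀ * U) * PV with hH
  have hOO : O * Oᵀ = 1 := mul_eq_one_comm.mp hO
  have hdO : IsUnit O.det := by
    have h : O.det * O.det = 1 := by
      have := congrArg det hO
      rwa [det_mul, det_transpose, det_one] at this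
    exact IsUnit.of_mul_eq_one _ h
  have hswap : Oᵀ * H = Hᵀ * O := by
    conv_lhs => rw [← hsymK]
    rw [transpose_mul, transpose_transpose]
  have hYinv : PY * PY⁻¹ = 1 := mul_nonsing_inv _ hdY
  have hYinv' : PY⁻¹ * PY = 1 := nonsing_inv_mul _ hdY
  have hVinv : PV * PV⁻¹ = 1 := mul_nonsing_inv _ hdV
  have hVinv' : PV⁻¹ * PV = 1 := nonsing_inv_mul _ hdV
  have can : ∀ (A B : Matrix (Fin k) (Fin k) ℝ), A * B = 1 →
      ∀ {p : ℕ} (Z : Matrix (Fin k) (Fin p) ℝ), A * (B * Z) = Z := by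
    intro A B h p Z
    rw [← Matrix.mul_assoc, h, Matrix.one_mul]
  set M := PY * O * PV⁻¹ with hM
  have hdM : IsUnit M.det := by
    rw [hM, det_mul, det_mul]
    exact (hdY.mul hdO).mul (isUnit_nonsing_inv_det _ hdV)
  have hMt : Mᵀ = PV⁻¹ * (Oᵀ * PY) := by
    rw [hM, transpose_mul, transpose_mul, hPYsym, transpose_nonsing_inv, hPVsym]
  have hMinv : M⁻¹ = PV * Oᵀ * PY⁻¹ := by
    apply inv_eq_right_inv
    rw [hM]
    simp only [Matrix.mul_assoc]
    rw [can _ _ hVinv', can _ _ hOO, hYinv]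
  have hMinvT : (M⁻¹)ᵀ = PY⁻¹ * (O * PV) := by
    rw [hMinv, transpose_mul, transpose_mul, hPVsym, transpose_nonsing_inv, hPYsym, transpose_transpose]
  have hHt : Hᵀ = PV * ((Uᵀ * X) * PY) := by
    rw [hH, transpose_mul, transpose_mul, transpose_mul, transpose_transpose,
      hPYsym, hPVsym]
  have hMM : M * M⁻¹ = 1 := mul_nonsing_inv _ hdM
  set A := U * Vᵀ - X * Yᵀ with hA
  set B := X * M * Vᵀ - U * M⁻¹ * Yᵀ with hB
  -- the two expansions
  have exp1 : (U + X * M) * (V - Y * (M⁻¹)ᵀ)ᵀ = A + B := by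
    rw [transpose_sub, transpose_mul, transpose_transpose, Matrix.mul_sub, Matrix.add_mul, Matrix.add_mul, hA, hB]
    have hXY : X * M * (M⁻¹ * Yᵀ) = X * Yᵀ := by
      simp only [Matrix.mul_assoc]
      rw [can _ _ hMM]
    rw [hXY]
    simp only [Matrix.mul_assoc]
    abel
  have exp2 : (U - X * M) * (V + Y * (M⁻¹)ᵀ)ᵀ = A - B := by
    rw [transpose_add, transpose_mul, transpose_transpose, Matrix.mul_add, Matrix.sub_mul, Matrix.sub_mul, hA, hB]
    have hXY : X * M * (M⁻¹ * Yᵀ) = X * Yᵀ := by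
      simp only [Matrix.mul_assoc]
      rw [can _ _ hMM]
    rw [hXY]
    simp only [Matrix.mul_assoc]
    abel
  -- the three trace identities
  have e1 : trace ((X * M)ᵀ * (X * M) * (Vᵀ * V)) = trace ((Xᵀ * X) * (Yᵀ * Y)) := by
    rw [transpose_mul, ← hPV2]
    simp only [Matrix.mul_assoc]
    rw [Matrix.trace_mul_comm]
    simp only [Matrix.mul_assoc]
    rw [hMt, hM]
    simp only [Matrix.mul_assoc]
    rw [can _ _ hVinv', can _ _ hVinv, can _ _ hOO, hPY2]
  have e2 : trace ((U * M⁻¹)ᵀ * (U * M⁻¹) * (Yᵀ * Y)) = trace ((Uᵀ * U) * (Vᵀ * V)) := by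
    rw [transpose_mul, ← hPY2]
    simp only [Matrix.mul_assoc]
    rw [Matrix.trace_mul_comm]
    simp only [Matrix.mul_assoc]
    rw [hMinvT, hMinv]
    simp only [Matrix.mul_assoc]
    rw [can _ _ hYinv', can _ _ hYinv, can _ _ hO, hPV2]
  have e3 : (X * M)ᵀ * (U * M⁻¹) = Uᵀ * X := by
    calc (X * M)ᵀ * (U * M⁻¹)
        = (PV⁻¹ * (Oᵀ * PY)) * (Xᵀ * (U * (PV * (Oᵀ * PY⁻¹)))) := by
          rw [transpose_mul, hMt, hMinv]
          simp only [Matrix.mul_assoc]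
      _ = PV⁻¹ * ((Oᵀ * H) * (Oᵀ * PY⁻¹)) := by
          rw [hH]
          simp only [Matrix.mul_assoc]
      _ = PV⁻¹ * ((Hᵀ * O) * (Oᵀ * PY⁻¹)) := by rw [hswap]
      _ = PV⁻¹ * (Hᵀ * PY⁻¹) := by
          simp only [Matrix.mul_assoc]
          rw [can _ _ hOO]
      _ = Uᵀ * X := by
          rw [hHt]
          simp only [Matrix.mul_assoc]
          rw [can _ _ hVinv', hYinv]
          simp only [Matrix.mul_one]
  have hBA : frobSq B = frobSq A := by
    rw [hA, hB, frobSq_sub, frobSq_sub, frobSq_factor, frobSq_factor, frobSq_factor,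
      frobSq_factor, trace_factor_cross, trace_factor_cross, e1, e2, e3]
    ring
  refine ⟨M, hdM, ?_⟩
  rw [exp1, exp2, frobSq_parallelogram, hBA]
  linarith
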